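/- Let a₁, a₂ ∈ EuclideanSpace ℂ (Fin d) be unit vectors with γ = ⟨a₁, a₂⟩ satisfying 0 < |γ| < 1. Set Γ = √(9 − 8|γ|²) and ν = √(2Γ(Γ − 3 + 4|γ|²)), and define a₁' = ν⁻¹ • (4|γ| • a₁ + (Γ − 3)(conj(γ)/|γ|) • a₂) and a₂' = ν⁻¹ • (4|γ| • a₂ + (Γ − 3)(γ/|γ|) • a₁). Then: (i) ν is a positive real number; (ii) a₁' and a₂' are unit vectors; (iii) ⟨a₁', a₂'⟩ = γ/Γ, and hence |⟨a₁', a₂'⟩|² = |γ|²/(9 − 8|γ|²) < |γ|² = |⟨a₁, a₂⟩|². (One cycle of the separability power iteration for the operator 2·1 − V strictly decreases the overlap of the subsystem states.) -/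

import Mathlib

open scoped ComplexInnerProductSpace

set_option maxHeartbeats 1000000 in
open Complex in
/-- **One cycle of the separability power iteration for `2·1 − V` strictly decreases the
overlap.**  Let `a₁, a₂` be unit vectors with `γ = ⟨a₁, a₂⟩`, `0 < |γ| < 1`,
`Γ = √(9 − 8|γ|²)`, `ν = √(2Γ(Γ − 3 + 4|γ|²))`, and let
`a₁' = ν⁻¹ (4|γ| a₁ + (Γ−3)(γ*/|γ|) a₂)`, `a₂' = ν⁻¹ (4|γ| a₂ + (Γ−3)(γ/|γ|) a₁)`.
Then `ν > 0`, `a₁'` and `a₂'` are unit vectors, `⟨a₁', a₂'⟩ = γ/Γ`, and hence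
`|⟨a₁', a₂'⟩|² = |γ|²/(9 − 8|γ|²) < |γ|² = |⟨a₁, a₂⟩|²`. -/
theorem spi_swap_cycle {d : ℕ} (hd : 2 ≤ d)
    (a₁ a₂ : EuclideanSpace ℂ (Fin d)) (ha₁ : ‖a₁‖ = 1) (ha₂ : ‖a₂‖ = 1)
    (γ : ℂ) (hγ : γ = ⟪a₁, a₂⟫) (hγ0 : 0 < ‖γ‖) (hγ1 : ‖γ‖ < 1)
    (Γ : ℝ) (hΓ : Γ = Real.sqrt (9 - 8 * ‖γ‖ ^ 2))
    (ν : ℝ) (hν : ν = Real.sqrt (2 * Γ * (Γ - 3 + 4 * ‖γ‖ ^ 2)))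
    (a₁' a₂' : EuclideanSpace ℂ (Fin d))
    (ha₁' : a₁' = ((ν : ℂ))⁻¹ • (((4 * ‖γ‖ : ℝ) : ℂ) • a₁ +
      (((Γ - 3 : ℝ) : ℂ) * ((starRingEnd ℂ) γ / (‖γ‖ : ℂ))) • a₂))
    (ha₂' : a₂' = ((ν : ℂ))⁻¹ • (((4 * ‖γ‖ : ℝ) : ℂ) • a₂ +
      (((Γ - 3 : ℝ) : ℂ) * (γ / (‖γ‖ : ℂ))) • a₁)) :
    0 < ν ∧
    ‖a₁'‖ = 1 ∧ ‖a₂'‖ = 1 ∧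
    ⟪a₁', a₂'⟫ = γ / (Γ : ℂ) ∧
    ‖⟪a₁', a₂'⟫‖ ^ 2 = ‖γ‖ ^ 2 / (9 - 8 * ‖γ‖ ^ 2) ∧
    ‖γ‖ ^ 2 / (9 - 8 * ‖γ‖ ^ 2) < ‖γ‖ ^ 2 ∧
    ‖γ‖ ^ 2 = ‖⟪a₁, a₂⟫‖ ^ 2 := by
  set g : ℝ := ‖γ‖ with hg
  have h9 : (0:ℝ) < 9 - 8 * g ^ 2 := by nlinarith
  have hlt : g ^ 2 / (9 - 8 * g ^ 2) < g ^ 2 := by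
    have hg2 : (0:ℝ) < g ^ 2 := by positivity
    have h8 : (0:ℝ) < 8 - 8 * g ^ 2 := by nlinarith
    rw [div_lt_iff₀ h9]; nlinarith [mul_pos hg2 h8]
  have hΓsq : Γ ^ 2 = 9 - 8 * g ^ 2 := by rw [hΓ, Real.sq_sqrt h9.le]
  have hΓpos : 0 < Γ := by rw [hΓ]; exact Real.sqrt_pos.mpr h9
  have hkey : 0 < Γ - 3 + 4 * g ^ 2 := by nlinarith
  have hνsq : ν ^ 2 = 2 * Γ * (Γ - 3 + 4 * g ^ 2) := by
    rw [hν, Real.sq_sqrt (by positivity)]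
  have hνpos : 0 < ν := by rw [hν]; exact Real.sqrt_pos.mpr (by positivity)
  have hgc : (g : ℂ) ≠ 0 := by exact_mod_cast hγ0.ne'
  have hνc : (ν : ℂ) ≠ 0 := by exact_mod_cast hνpos.ne'
  have hΓc : (Γ : ℂ) ≠ 0 := by exact_mod_cast hΓpos.ne'
  have hΓsqc : (Γ : ℂ) ^ 2 = 9 - 8 * (g : ℂ) ^ 2 := by
    exact_mod_cast congrArg (Complex.ofReal ·) hΓsq
  have hνsqc : (ν : ℂ) ^ 2 = 2 * Γ * (Γ - 3 + 4 * (g : ℂ) ^ 2) := by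
    exact_mod_cast congrArg (Complex.ofReal ·) hνsq
  have hcγ : (starRingEnd ℂ) γ * γ = (g : ℂ) ^ 2 := by rw [Complex.conj_mul']
  have h11 : ⟪a₁, a₁⟫ = (1 : ℂ) := by
    rw [inner_self_eq_norm_sq_to_K, ha₁]; norm_num
  have h22 : ⟪a₂, a₂⟫ = (1 : ℂ) := by
    rw [inner_self_eq_norm_sq_to_K, ha₂]; norm_num
  have h12 : ⟪a₁, a₂⟫ = γ := hγ.symm
  have h21 : ⟪a₂, a₁⟫ = (starRingEnd ℂ) γ := by rw [← inner_conj_symm, h12]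
  have hD : (ν:ℂ) * ((ν:ℂ) * (g:ℂ) * ((g:ℂ) * ((ν:ℂ) * (g:ℂ)))) ≠ 0 := by
    simp [hνc, hgc]
  have hn1 : ⟪a₁', a₁'⟫ = (1 : ℂ) := by
    simp only [ha₁', inner_smul_left, inner_smul_right, inner_add_left,
      inner_add_right, h11, h22, h12, h21, map_mul, map_inv₀, Complex.conj_ofReal,
      map_div₀, Complex.conj_conj, mul_one]
    push_cast
    field_simp
    linear_combination (1:ℂ) *
      ((8 * (g:ℂ)^2 * ((Γ:ℂ) - 3) + ((Γ:ℂ) - 3)^2) * hcγ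
        - (g:ℂ)^2 * hνsqc - (g:ℂ)^2 * hΓsqc)
  have hn2 : ⟪a₂', a₂'⟫ = (1 : ℂ) := by
    simp only [ha₂', inner_smul_left, inner_smul_right, inner_add_left,
      inner_add_right, h11, h22, h12, h21, map_mul, map_inv₀, Complex.conj_ofReal,
      map_div₀, Complex.conj_conj, mul_one]
    push_cast
    field_simp
    linear_combination (1:ℂ) *
      ((8 * (g:ℂ)^2 * ((Γ:ℂ) - 3) + ((Γ:ℂ) - 3)^2) * hcγ
        - (g:ℂ)^2 * hνsqc - (g:ℂ)^2 * hΓsqc)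
  have hinner : ⟪a₁', a₂'⟫ = γ / (Γ : ℂ) := by
    simp only [ha₁', ha₂', inner_smul_left, inner_smul_right, inner_add_left,
      inner_add_right, h11, h22, h12, h21, map_mul, map_inv₀, Complex.conj_ofReal,
      map_div₀, Complex.conj_conj, mul_one]
    push_cast
    field_simp
    linear_combination γ *
      ((Γ:ℂ) * ((Γ:ℂ) - 3)^2 * hcγ - (g:ℂ)^2 * hνsqc + (g:ℂ)^2 * (Γ:ℂ) * hΓsqc)
  have hself : ∀ x : EuclideanSpace ℂ (Fin d), ⟪x, x⟫ = (1:ℂ) → ‖x‖ = 1 := by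
    intro x hx
    have h := inner_self_eq_norm_sq_to_K (𝕜 := ℂ) x
    rw [hx] at h
    have h2 : ‖x‖ ^ 2 = 1 := Complex.ofReal_eq_one.mp (by push_cast at h ⊢; exact h.symm)
    rw [← Real.sqrt_one, ← h2, Real.sqrt_sq (norm_nonneg x)]
  refine ⟨hνpos, hself _ hn1, hself _ hn2, hinner, ?_, ?_, by rw [h12]⟩
  · rw [hinner, norm_div, div_pow]
    congr 1
    · rw [Complex.norm_real, Real.norm_eq_abs, _root_.sq_abs Γ, hΓsq]
  · exact hlt
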